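/- Let 0 → O_Y^{r−1} → F → L → 0 be a short exact sequence of O_Y-modules on a scheme Y over a base S, flat over S, such that the central fibre (restriction to the closed fibre Y₀) of the map i : O_Y^{r−1} → F is injective with invertible cokernel. If F is S-flat and coherent and L = coker(i), then L is S-flat and invertible. -/

import Mathlib

open TensorProduct

section aux
variable {Λ : Type*} [CommRing Λ] (m : Ideal Λ)
variable (N : Type*) [AddCommGroup N] [Module Λ N]

/-- the action map `m ⊗ N → N`. -/
noncomputable def smulMapAux : m ⊗[Λ] N →ₗ[Λ] N :=
  TensorProduct.lift ((LinearMap.lsmul Λ N).comp m.subtype)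

@[simp] lemma smulMapAux_tmul (a : m) (x : N) : smulMapAux m N (a ⊗ₜ x) = (a : Λ) • x := rfl

lemma smulMapAux_eq : smulMapAux m N
    = (TensorProduct.lid Λ N).toLinearMap.comp (LinearMap.rTensor N m.subtype) := by
  apply TensorProduct.ext'
  intro a x
  simp [smulMapAux]

lemma smulMapAux_injective [Module.Flat Λ N] : Function.Injective (smulMapAux m N) := by
  rw [smulMapAux_eq]
  exact (TensorProduct.lid Λ N).injective.comp
    ((Module.Flat.iff_rTensor_injective' (R := Λ) (M := N)).mp inferInstance m)

variable {P : Type*} [AddCommGroup P] [Module Λ P]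

lemma smulMapAux_natural (g : N →ₗ[Λ] P) :
    g.comp (smulMapAux m N) = (smulMapAux m P).comp (LinearMap.lTensor m g) := by
  apply TensorProduct.ext'
  intro a x
  simp

end aux
theorem stmt11 (Λ : Type*) [CommRing Λ] [IsNoetherianRing Λ] [IsLocalRing Λ]
    (R : Type*) [CommRing R] [IsNoetherianRing R] [IsLocalRing R]
    [Algebra Λ R] [IsLocalHom (algebraMap Λ R)]
    (F : Type*) [AddCommGroup F] [Module R F] [Module Λ F] [IsScalarTower Λ R F]
    [Module.Finite R F] [Module.Flat Λ F]
    (n : ℕ) (i : (Fin n → R) →ₗ[R] F)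
    (J : Ideal R) (hJ : J = (IsLocalRing.maximalIdeal Λ).map (algebraMap Λ R))
    -- the central fibre i₀ of i is injective
    (hinj₀ : ∀ x : Fin n → R, i x ∈ (J • (⊤ : Submodule R F)) → ∀ k, x k ∈ J)
    -- the cokernel of i₀ is invertible (free of rank one over R/J)
    (hinv₀ : Nonempty ((F ⧸ (LinearMap.range i ⊔ J • (⊤ : Submodule R F))) ≃ₗ[R] (R ⧸ J))) :
    Function.Injective i ∧
    Module.Flat Λ (F ⧸ ((LinearMap.range i).restrictScalars Λ)) ∧
    Nonempty ((F ⧸ LinearMap.range i) ≃ₗ[R] R) := by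
  classical
  obtain ⟨e⟩ := hinv₀
  set m : Ideal Λ := IsLocalRing.maximalIdeal Λ with hm
  -- J is contained in the maximal ideal of R
  have hJle : J ≤ IsLocalRing.maximalIdeal R := by
    rw [hJ, Ideal.map_le_iff_le_comap]
    intro a ha
    exact map_nonunit (algebraMap Λ R) a ha
  have hJjac : J ≤ Ideal.jacobson ⊥ := by
    rw [IsLocalRing.jacobson_eq_maximalIdeal ⊥ bot_ne_top]; exact hJle
  have halgJ : ∀ a : Λ, a ∈ m → algebraMap Λ R a ∈ J := fun a ha => by
    rw [hJ]; exact Ideal.mem_map_of_mem _ ha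
  -- choose a lift f of the generator of the cokernel
  obtain ⟨f, hf⟩ := Submodule.Quotient.mk_surjective
    (LinearMap.range i ⊔ J • (⊤ : Submodule R F)) (e.symm 1)
  -- the extended map j
  set j : ((Fin n → R) × R) →ₗ[R] F := i.coprod (LinearMap.toSpanSingleton R F f) with hjdef
  have hj_apply : ∀ y c, j (y, c) = i y + c • f := fun y c => by
    simp [hjdef, LinearMap.toSpanSingleton_apply]
  have hi_range : ∀ y : Fin n → R, i y ∈ LinearMap.range j := fun y =>
    ⟨(y, 0), by simp [hj_apply]⟩
  -- `1 ∈ R/J` smul lemma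
  have hsmul_one : ∀ c : R, c • (1 : R ⧸ J) = Submodule.Quotient.mk c := fun c => by
    rw [show (1 : R ⧸ J) = Submodule.Quotient.mk (1 : R) from rfl,
      ← Submodule.Quotient.mk_smul, smul_eq_mul, mul_one]
  -- surjectivity of j
  have hjsurj : Function.Surjective j := by
    have htop : (⊤ : Submodule R F) ≤ LinearMap.range j ⊔ J • (⊤ : Submodule R F) := by
      intro x _
      obtain ⟨c, hc⟩ := Submodule.Quotient.mk_surjective J (e (Submodule.Quotient.mk x))
      have h1 : (Submodule.Quotient.mk (x - c • f) :
          F ⧸ (LinearMap.range i ⊔ J • (⊤ : Submodule R F))) = 0 := by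
        apply e.injective
        rw [map_zero, Submodule.Quotient.mk_sub, map_sub, Submodule.Quotient.mk_smul,
          map_smul, hf, e.apply_symm_apply, hsmul_one, hc, sub_self]
      have h2 := (Submodule.Quotient.mk_eq_zero _).mp h1
      obtain ⟨u, hu, v, hv, huv⟩ := Submodule.mem_sup.mp h2
      refine Submodule.mem_sup.mpr ⟨u + c • f, ?_, v, hv, ?_⟩
      · exact add_mem (hu.elim fun y hy => hy ▸ hi_range y) ⟨(0, c), by simp [hj_apply]⟩
      · rw [add_right_comm]
        exact eq_sub_iff_add_eq.mp huv
    have hfg : (⊤ : Submodule R F).FG := Module.Finite.fg_top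
    have := Submodule.sup_eq_sup_smul_of_le_smul_of_le_jacobson
      (N := LinearMap.range j) (N' := (⊤ : Submodule R F)) (I := J) hfg hJjac htop
    rw [← LinearMap.range_eq_top]
    simpa using this.symm
  -- central-fibre injectivity of j : elements of ker j lie in J • ⊤
  have hker0 : ∀ x : (Fin n → R) × R, j x = 0 →
      x ∈ J • (⊤ : Submodule R ((Fin n → R) × R)) := by
    rintro ⟨y, c⟩ hx
    rw [hj_apply] at hx
    -- c ∈ J
    have hcf : c • f = - i y := eq_neg_of_add_eq_zero_right hx
    have hcJ : c ∈ J := by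
      have h1 : (Submodule.Quotient.mk (c • f) :
          F ⧸ (LinearMap.range i ⊔ J • (⊤ : Submodule R F))) = 0 := by
        rw [hcf, Submodule.Quotient.mk_eq_zero]
        exact neg_mem (Submodule.mem_sup_left ⟨y, rfl⟩)
      have h2 : c • (1 : R ⧸ J) = 0 := by
        rw [← e.apply_symm_apply 1, ← map_smul, ← hf, ← Submodule.Quotient.mk_smul, h1, map_zero]
      rw [hsmul_one, Submodule.Quotient.mk_eq_zero] at h2
      exact h2
    have hiy : i y ∈ J • (⊤ : Submodule R F) := by
      rw [eq_neg_of_add_eq_zero_left hx]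
      exact neg_mem (Submodule.smul_mem_smul hcJ trivial)
    have hyJ := hinj₀ y hiy
    -- decompose (y, c)
    have hdecomp : ((y, c) : (Fin n → R) × R)
        = (∑ k, (y k) • ((Pi.single k 1 : Fin n → R), (0:R))) + c • ((0 : Fin n → R), (1:R)) := by
      ext t
      · simp [Prod.fst_sum, Finset.sum_apply, Pi.single_apply, smul_eq_mul, mul_ite,
          mul_one, mul_zero, Finset.sum_ite_eq]
      · simp [Prod.snd_sum]
    rw [hdecomp]
    refine add_mem (Submodule.sum_mem _ fun k _ => Submodule.smul_mem_smul (hyJ k) trivial)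
      (Submodule.smul_mem_smul hcJ trivial)
  -- membership in J • ⊤ gives membership in range of the action map
  have hrange : ∀ (x : (Fin n → R) × R), x ∈ J • (⊤ : Submodule R ((Fin n → R) × R)) →
      x ∈ Set.range (smulMapAux m ((Fin n → R) × R)) := by
    intro x hx
    refine Submodule.smul_induction_on hx (fun b hb z hz => ?_)
      (fun z w ⟨t, ht⟩ ⟨s, hs⟩ => ⟨t + s, by rw [map_add, ht, hs]⟩)
    rw [hJ] at hb
    clear hz
    induction hb using Submodule.span_induction generalizing z with
    | mem b hbmem =>
        obtain ⟨a, ha, rfl⟩ := hbmem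
        exact ⟨(⟨a, ha⟩ : m) ⊗ₜ z, by simp [algebraMap_smul]⟩
    | zero => exact ⟨0, by simp⟩
    | add b b' _ _ ihb ihb' =>
        obtain ⟨t, ht⟩ := ihb z
        obtain ⟨s, hs⟩ := ihb' z
        exact ⟨t + s, by rw [map_add, ht, hs, add_smul]⟩
    | smul r b _ ihb =>
        obtain ⟨t, ht⟩ := ihb (r • z)
        refine ⟨t, ?_⟩
        rw [smul_eq_mul, mul_comm, mul_smul]
        exact ht
  -- the action map on the kernel lands in J • ker j
  have hKrange : ∀ t : m ⊗[Λ] ((LinearMap.ker j).restrictScalars Λ),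
      ((smulMapAux m ((LinearMap.ker j).restrictScalars Λ) t : (Fin n → R) × R))
        ∈ J • (LinearMap.ker j) := by
    intro t
    induction t using TensorProduct.induction_on with
    | zero => simp
    | tmul a w =>
        rw [smulMapAux_tmul, Submodule.coe_smul, ← algebraMap_smul R (a : Λ)]
        exact Submodule.smul_mem_smul (halgJ a a.2) w.2
    | add t s ht hs =>
        rw [map_add, Submodule.coe_add]
        exact add_mem ht hs
  -- exactness after tensoring
  set K : Submodule Λ ((Fin n → R) × R) := (LinearMap.ker j).restrictScalars Λ with hKdef
  set jΛ : ((Fin n → R) × R) →ₗ[Λ] F := j.restrictScalars Λ with hjΛ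
  have hexact : Function.Exact K.subtype jΛ := by
    intro x
    constructor
    · intro hx; exact ⟨⟨x, hx⟩, rfl⟩
    · rintro ⟨⟨w, hw⟩, rfl⟩; exact hw
  have hexactT := lTensor_exact (↥m) hexact hjsurj
  -- ker j = ⊥
  haveI : IsNoetherian R ((Fin n → R) × R) := inferInstance
  have hkerbot : LinearMap.ker j = ⊥ := by
    refine Submodule.eq_bot_of_le_smul_of_le_jacobson_bot J _ (IsNoetherian.noetherian _)
      (fun x hx => ?_) hJjac
    obtain ⟨t, ht⟩ := hrange x (hker0 x hx)
    have hnat := LinearMap.congr_fun (smulMapAux_natural m _ jΛ) t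
    simp only [LinearMap.comp_apply] at hnat
    have hjx : LinearMap.lTensor (↥m) jΛ t = 0 := by
      apply smulMapAux_injective m F
      rw [← hnat, ht, map_zero]
      exact hx
    obtain ⟨u, hu⟩ := (hexactT t).mp hjx
    have hnat2 := LinearMap.congr_fun (smulMapAux_natural m _ K.subtype) u
    simp only [LinearMap.comp_apply] at hnat2
    rw [← ht, ← hu, ← hnat2]
    exact hKrange u
  have hjinj : Function.Injective j := LinearMap.ker_eq_bot.mp hkerbot
  -- i is injective
  have hiinj : Function.Injective i := by
    intro y y' h
    have hj2 : j (y, 0) = j (y', 0) := by simp [hj_apply, h]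
    have := hjinj hj2
    exact congrArg Prod.fst this
  -- the isomorphism j
  set ej : ((Fin n → R) × R) ≃ₗ[R] F := LinearEquiv.ofBijective j ⟨hjinj, hjsurj⟩ with hej
  have hmap : (LinearMap.range (LinearMap.inl R (Fin n → R) R)).map
      (ej : ((Fin n → R) × R) →ₗ[R] F) = LinearMap.range i := by
    ext x
    simp only [Submodule.mem_map, LinearMap.mem_range]
    constructor
    · rintro ⟨w, ⟨y, rfl⟩, rfl⟩
      exact ⟨y, by show i y = j (y, 0); simp [hj_apply]⟩
    · rintro ⟨y, rfl⟩
      exact ⟨(y, 0), ⟨y, rfl⟩, by show j (y, 0) = i y; simp [hj_apply]⟩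
  have qe : (((Fin n → R) × R) ⧸ LinearMap.range (LinearMap.inl R (Fin n → R) R))
      ≃ₗ[R] (F ⧸ LinearMap.range i) := Submodule.Quotient.equiv _ _ ej hmap
  have hsndsurj : Function.Surjective (LinearMap.snd R (Fin n → R) R) := fun c => ⟨(0, c), rfl⟩
  have e2 : (((Fin n → R) × R) ⧸ LinearMap.range (LinearMap.inl R (Fin n → R) R)) ≃ₗ[R] R :=
    (Submodule.quotEquivOfEq _ _ (LinearMap.range_inl R (Fin n → R) R)).trans
      ((LinearMap.snd R (Fin n → R) R).quotKerEquivOfSurjective hsndsurj)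
  have cok : (F ⧸ LinearMap.range i) ≃ₗ[R] R := qe.symm.trans e2
  -- flatness
  have flatM : Module.Flat Λ ((Fin n → R) × R) :=
    Module.Flat.of_linearEquiv (ej.restrictScalars Λ)
  have flatR : Module.Flat Λ R :=
    Module.Flat.of_retract
      ((LinearMap.inr R (Fin n → R) R).restrictScalars Λ)
      ((LinearMap.snd R (Fin n → R) R).restrictScalars Λ) (by ext x; rfl)
  have eΛ : (F ⧸ (LinearMap.range i).restrictScalars Λ) ≃ₗ[Λ] R :=
    (Submodule.Quotient.restrictScalarsEquiv Λ (LinearMap.range i)).trans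
      (cok.restrictScalars Λ)
  exact ⟨hiinj, Module.Flat.of_linearEquiv eΛ, ⟨cok⟩⟩
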